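/- arXiv:1602.01021 — 2 statements merged into one kernel-verified Lean document; each statement's English description precedes it below -/
import Mathlib

section
/- The function Ω vanishes exactly at the Fermi points modulo the reciprocal lattice: for every k ∈ ℝ², Ω(k) = 0 if and only if k − k_F^+ ∈ Λ* or k − k_F^− ∈ Λ*, where Λ* = {m₁b₁ + m₂b₂ : m₁, m₂ ∈ ℤ} is the reciprocal lattice generated by b₁ = (2π/3)(1, −√3) and b₂ = (2π/3)(1, √3). -/
open Real Complex

/-- The dot product of two vectors in `ℝ²`. -/
noncomputable def dot (k l : EuclideanSpace ℝ (Fin 2)) : ℝ := k 0 * l 0 + k 1 * l 1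

/-- First basis vector of the triangular lattice. -/
noncomputable def ell1 : EuclideanSpace ℝ (Fin 2) := WithLp.toLp 2 ![3/2, -Real.sqrt 3 / 2]

/-- Second basis vector of the triangular lattice. -/
noncomputable def ell2 : EuclideanSpace ℝ (Fin 2) := WithLp.toLp 2 ![3/2, Real.sqrt 3 / 2]

/-- The function `Ω(k) = 1 + e^{-i k·ℓ₁} + e^{-i k·ℓ₂}`. -/
noncomputable def Omega (k : EuclideanSpace ℝ (Fin 2)) : ℂ :=
  1 + Complex.exp (-Complex.I * (dot k ell1)) + Complex.exp (-Complex.I * (dot k ell2))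

/-- The Fermi point `k_F^+`. -/
noncomputable def kFplus : EuclideanSpace ℝ (Fin 2) := WithLp.toLp 2 ![2 * π / 3, 2 * π / (3 * Real.sqrt 3)]

/-- The Fermi point `k_F^-`. -/
noncomputable def kFminus : EuclideanSpace ℝ (Fin 2) := WithLp.toLp 2 ![2 * π / 3, -(2 * π / (3 * Real.sqrt 3))]

/-- First basis vector of the reciprocal lattice. -/
noncomputable def bb1 : EuclideanSpace ℝ (Fin 2) := WithLp.toLp 2 ((2 * π / 3) • ![1, -Real.sqrt 3])

/-- Second basis vector of the reciprocal lattice. -/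
noncomputable def bb2 : EuclideanSpace ℝ (Fin 2) := WithLp.toLp 2 ((2 * π / 3) • ![1, Real.sqrt 3])

/-- The reciprocal lattice `Λ* = {m₁ b₁ + m₂ b₂ : m₁, m₂ ∈ ℤ}`. -/
noncomputable def recipLattice : Set (EuclideanSpace ℝ (Fin 2)) :=
  { x | ∃ m₁ m₂ : ℤ, x = m₁ • bb1 + m₂ • bb2 }

section OmegaAux

private lemma exp_neg_I_real' (u : ℝ) :
    Complex.exp (-Complex.I * u) = Complex.ofReal (Real.cos u) + Complex.ofReal (-(Real.sin u)) * Complex.I := by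
  rw [show -Complex.I * (u:ℂ) = ((-u : ℝ):ℂ) * Complex.I by push_cast; ring, Complex.exp_mul_I,
    ← Complex.ofReal_cos, ← Complex.ofReal_sin]
  push_cast [Real.cos_neg, Real.sin_neg]
  ring

private lemma key' (u v : ℝ) :
    1 + Complex.exp (-Complex.I * u) + Complex.exp (-Complex.I * v) = 0 ↔
    (1 + Real.cos u + Real.cos v = 0 ∧ Real.sin u + Real.sin v = 0) := by
  rw [exp_neg_I_real', exp_neg_I_real', Complex.ext_iff]
  simp [Complex.cos_ofReal_re, Complex.sin_ofReal_re]
  intro _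
  constructor <;> intro <;> linarith

private lemma realside' (u v : ℝ) :
    (1 + Real.cos u + Real.cos v = 0 ∧ Real.sin u + Real.sin v = 0) ↔
    ∃ n m : ℤ, (u = 2*n*π + 2*π/3 ∧ v = 2*m*π - 2*π/3) ∨
               (u = 2*n*π - 2*π/3 ∧ v = 2*m*π + 2*π/3) := by
  have hc23 : Real.cos (2*π/3) = -(1/2) := by
    rw [show 2*π/3 = π - π/3 by ring, Real.cos_pi_sub, Real.cos_pi_div_three]
  have hs23 : Real.sin (2*π/3) = Real.sqrt 3/2 := by
    rw [show 2*π/3 = π - π/3 by ring, Real.sin_pi_sub, Real.sin_pi_div_three]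
  have h3 : (0:ℝ) < Real.sqrt 3 := by positivity
  have su1 : ∀ (x:ℝ) (j:ℤ), x = 2*j*π + 2*π/3 → Real.sin x = Real.sqrt 3/2 := by
    intro x j hx
    rw [hx, show 2*(j:ℝ)*π + 2*π/3 = 2*π/3 + j*(2*π) by ring,
      Real.sin_add_int_mul_two_pi, hs23]
  have su2 : ∀ (x:ℝ) (j:ℤ), x = 2*j*π - 2*π/3 → Real.sin x = -(Real.sqrt 3/2) := by
    intro x j hx
    rw [hx, show 2*(j:ℝ)*π - 2*π/3 = -(2*π/3) + j*(2*π) by ring,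
      Real.sin_add_int_mul_two_pi, Real.sin_neg, hs23]
  have cu1 : ∀ (x:ℝ) (j:ℤ), x = 2*j*π + 2*π/3 → Real.cos x = -(1/2) := by
    intro x j hx
    rw [hx, show 2*(j:ℝ)*π + 2*π/3 = 2*π/3 + j*(2*π) by ring,
      Real.cos_add_int_mul_two_pi, hc23]
  have cu2 : ∀ (x:ℝ) (j:ℤ), x = 2*j*π - 2*π/3 → Real.cos x = -(1/2) := by
    intro x j hx
    rw [hx, show 2*(j:ℝ)*π - 2*π/3 = -(2*π/3) + j*(2*π) by ring,
      Real.cos_add_int_mul_two_pi, Real.cos_neg, hc23]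
  constructor
  · rintro ⟨h1, h2⟩
    have hsv : Real.sin v = -Real.sin u := by linarith
    have hcv : Real.cos v = -1 - Real.cos u := by linarith
    have e1 : Real.sin v ^ 2 = Real.sin u ^ 2 := by rw [hsv]; ring
    have e2 : Real.cos v ^ 2 = 1 + 2*Real.cos u + Real.cos u ^ 2 := by rw [hcv]; ring
    have hcu : Real.cos u = -(1/2) := by
      linarith [Real.sin_sq_add_cos_sq u, Real.sin_sq_add_cos_sq v]
    have hu : Real.cos u = Real.cos (2*π/3) := by rw [hc23, hcu]
    have hv' : Real.cos v = Real.cos (2*π/3) := by rw [hc23, hcv, hcu]; ring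
    rw [Real.cos_eq_cos_iff] at hu hv'
    obtain ⟨a, ha⟩ := hu
    obtain ⟨b, hb⟩ := hv'
    have hu2 : (∃ a : ℤ, u = 2*a*π + 2*π/3) ∨ (∃ a : ℤ, u = 2*a*π - 2*π/3) := by
      rcases ha with h | h
      · exact Or.inl ⟨-a, by push_cast; linarith⟩
      · exact Or.inr ⟨a, by linarith⟩
    have hv2 : (∃ b : ℤ, v = 2*b*π + 2*π/3) ∨ (∃ b : ℤ, v = 2*b*π - 2*π/3) := by
      rcases hb with h | h
      · exact Or.inl ⟨-b, by push_cast; linarith⟩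
      · exact Or.inr ⟨b, by linarith⟩
    rcases hu2 with ⟨a', ha'⟩ | ⟨a', ha'⟩ <;> rcases hv2 with ⟨b', hb'⟩ | ⟨b', hb'⟩
    · have := su1 u a' ha'; have := su1 v b' hb'; exfalso; linarith
    · exact ⟨a', b', Or.inl ⟨ha', hb'⟩⟩
    · exact ⟨a', b', Or.inr ⟨ha', hb'⟩⟩
    · have := su2 u a' ha'; have := su2 v b' hb'; exfalso; linarith
  · rintro ⟨n, m, ⟨hu, hv⟩ | ⟨hu, hv⟩⟩
    · have := su1 u n hu; have := su2 v m hv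
      have := cu1 u n hu; have := cu2 v m hv
      constructor <;> linarith
    · have := su2 u n hu; have := su1 v m hv
      have := cu2 u n hu; have := cu1 v m hv
      constructor <;> linarith

private lemma coordsP' (s k0 k1 : ℝ) (hs : s * s = 3) (hs0 : 0 < s) :
    (∃ n m : ℤ, k0*(3/2) + k1*(-(s/2)) = 2*n*π + 2*π/3 ∧
                k0*(3/2) + k1*(s/2) = 2*m*π - 2*π/3)
    ↔ (∃ m₁ m₂ : ℤ, k0 - 2*π/3 = 2*π/3*(m₁+m₂) ∧
                    k1 - 2*π/(3*s) = 2*π/3*s*(m₂-m₁)) := by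
  have hne : s ≠ 0 := ne_of_gt hs0
  constructor
  · rintro ⟨n, m, hu, hv⟩
    refine ⟨n, m - 1, ?_, ?_⟩
    · push_cast
      linarith
    · push_cast
      field_simp
      linear_combination 3*hv - 3*hu - 2*π*((m:ℝ)-1-(n:ℝ))*hs
  · rintro ⟨m₁, m₂, h0, h1⟩
    have h1' : s * k1 - 2*π/3 = 2*π*((m₂:ℝ)-(m₁:ℝ)) := by
      field_simp at h1
      linear_combination (1/3)*h1 + (2*π/3)*((m₂:ℝ)-(m₁:ℝ))*hs
    refine ⟨m₁, m₂ + 1, by push_cast; linarith, by push_cast; linarith⟩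

private lemma coordsM' (s k0 k1 : ℝ) (hs : s * s = 3) (hs0 : 0 < s) :
    (∃ n m : ℤ, k0*(3/2) + k1*(-(s/2)) = 2*n*π - 2*π/3 ∧
                k0*(3/2) + k1*(s/2) = 2*m*π + 2*π/3)
    ↔ (∃ m₁ m₂ : ℤ, k0 - 2*π/3 = 2*π/3*(m₁+m₂) ∧
                    k1 + 2*π/(3*s) = 2*π/3*s*(m₂-m₁)) := by
  have hne : s ≠ 0 := ne_of_gt hs0
  constructor
  · rintro ⟨n, m, hu, hv⟩
    refine ⟨n - 1, m, ?_, ?_⟩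
    · push_cast
      linarith
    · push_cast
      field_simp
      linear_combination 3*hv - 3*hu - 2*π*((m:ℝ)-(n:ℝ)+1)*hs
  · rintro ⟨m₁, m₂, h0, h1⟩
    have h1' : s * k1 + 2*π/3 = 2*π*((m₂:ℝ)-(m₁:ℝ)) := by
      field_simp at h1
      linear_combination (1/3)*h1 + (2*π/3)*((m₂:ℝ)-(m₁:ℝ))*hs
    refine ⟨m₁ + 1, m₂, by push_cast; linarith, by push_cast; linarith⟩

private lemma mem_recip_iff' (x : EuclideanSpace ℝ (Fin 2)) :
    x ∈ recipLattice ↔ ∃ m₁ m₂ : ℤ,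
      x 0 = 2*π/3*(m₁+m₂) ∧ x 1 = 2*π/3*Real.sqrt 3*(m₂-m₁) := by
  constructor
  · rintro ⟨m₁, m₂, rfl⟩
    refine ⟨m₁, m₂, ?_, ?_⟩ <;> simp [bb1, bb2] <;> ring
  · rintro ⟨m₁, m₂, h0, h1⟩
    refine ⟨m₁, m₂, PiLp.ext fun i => ?_⟩
    fin_cases i <;> simp [bb1, bb2, h0, h1] <;> ring

end OmegaAux

/-- `Ω` vanishes exactly at the Fermi points modulo the reciprocal lattice. -/
theorem omega_zero_iff_fermi_point (k : EuclideanSpace ℝ (Fin 2)) :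
    Omega k = 0 ↔ (k - kFplus ∈ recipLattice ∨ k - kFminus ∈ recipLattice) := by
  have hs : Real.sqrt 3 * Real.sqrt 3 = 3 := Real.mul_self_sqrt (by norm_num)
  have hs0 : (0:ℝ) < Real.sqrt 3 := by positivity
  have hdot1 : dot k ell1 = k 0 * (3/2) + k 1 * (-(Real.sqrt 3/2)) := by
    simp [dot, ell1]; ring
  have hdot2 : dot k ell2 = k 0 * (3/2) + k 1 * (Real.sqrt 3/2) := by
    simp [dot, ell2]
  have c0p : (k - kFplus) 0 = k 0 - 2*π/3 := by
    simp [kFplus]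
  have c1p : (k - kFplus) 1 = k 1 - 2*π/(3*Real.sqrt 3) := by
    simp [kFplus]
  have c0m : (k - kFminus) 0 = k 0 - 2*π/3 := by
    simp [kFminus]
  have c1m : (k - kFminus) 1 = k 1 + 2*π/(3*Real.sqrt 3) := by
    simp [kFminus]
  have memP := mem_recip_iff' (k - kFplus)
  rw [c0p, c1p] at memP
  have memM := mem_recip_iff' (k - kFminus)
  rw [c0m, c1m] at memM
  rw [Omega, hdot1, hdot2, key', realside', memP, memM,
    ← coordsP' (Real.sqrt 3) (k 0) (k 1) hs hs0,
    ← coordsM' (Real.sqrt 3) (k 0) (k 1) hs hs0]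
  constructor
  · rintro ⟨n, m, h | h⟩
    · exact Or.inl ⟨n, m, h⟩
    · exact Or.inr ⟨n, m, h⟩
  · rintro (⟨n, m, h⟩ | ⟨n, m, h⟩)
    · exact ⟨n, m, Or.inl h⟩
    · exact ⟨n, m, Or.inr h⟩
end

section
/- The function Ω vanishes linearly (and no faster) at the Fermi points: there exists ε > 0 such that for each sign ± and all k' ∈ ℝ² with |k'| ≤ ε one has |k'| ≤ |Ω(k_F^± + k')| ≤ 2|k'|. -/
open Real Complex

/-- The Fermi points `k_F^±`, parametrized by the sign `s = ±1`. -/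
noncomputable def kF (s : ℝ) : EuclideanSpace ℝ (Fin 2) :=
  WithLp.toLp 2 ![2 * π / 3, s * (2 * π / (3 * Real.sqrt 3))]

lemma f_est (a : ℝ) (ha : |a| ≤ 1) :
    ‖(1 - Complex.exp (-Complex.I * a)) - Complex.I * a‖ ≤ a ^ 2 := by
  have hz : ‖-Complex.I * a‖ ≤ 1 := by
    simpa [Complex.norm_real] using ha
  have h := Complex.norm_exp_sub_one_sub_id_le hz
  have heq : (1 - Complex.exp (-Complex.I * a)) - Complex.I * a
      = -(Complex.exp (-Complex.I * a) - 1 - (-Complex.I * a)) := by ring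
  rw [heq, norm_neg]
  calc ‖Complex.exp (-Complex.I * ↑a) - 1 - -Complex.I * ↑a‖
      ≤ ‖-Complex.I * a‖ ^ 2 := h
    _ = a ^ 2 := by simp [Complex.norm_real, sq_abs]

lemma exp_ofReal_mul_I' (t : ℝ) :
    Complex.exp (↑t * Complex.I) = ↑(Real.cos t) + ↑(Real.sin t) * Complex.I := by
  rw [Complex.exp_mul_I]; push_cast [Complex.ofReal_cos, Complex.ofReal_sin]; ring

set_option maxHeartbeats 2000000 in
/-- `Ω` vanishes linearly (and no faster) at the Fermi points: for `|k'| ≤ ε`,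
one has `|k'| ≤ |Ω(k_F^± + k')| ≤ 2 |k'|`. -/
theorem omega_linear_vanishing :
    ∃ ε > (0:ℝ), ∀ s : ℝ, (s = 1 ∨ s = -1) →
      ∀ k' : EuclideanSpace ℝ (Fin 2), ‖k'‖ ≤ ε →
        ‖k'‖ ≤ ‖Omega (kF s + k')‖ ∧
        ‖Omega (kF s + k')‖ ≤ 2 * ‖k'‖ := by
  refine ⟨1/9, by norm_num, ?_⟩
  intro s hs k' hk
  have h3 : Real.sqrt 3 * Real.sqrt 3 = 3 := Real.mul_self_sqrt (by norm_num)
  have h3n : Real.sqrt 3 ≠ 0 := by positivity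
  have hs2 : s ^ 2 = 1 := by rcases hs with h | h <;> rw [h] <;> norm_num
  set x : ℝ := k' 0 with hxdef
  set y : ℝ := k' 1 with hydef
  set a : ℝ := 3/2 * x - Real.sqrt 3/2 * y with hadef
  set b : ℝ := 3/2 * x + Real.sqrt 3/2 * y with hbdef
  set r : ℝ := ‖k'‖ with hrdef
  have hr0 : 0 ≤ r := norm_nonneg _
  have hr2 : r ^ 2 = x ^ 2 + y ^ 2 := by
    rw [hrdef, EuclideanSpace.norm_eq, Real.sq_sqrt (by positivity)]
    simp [Fin.sum_univ_two, sq_abs, hxdef, hydef]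
  have hd1 : dot (kF s + k') ell1 = (π - s*(π/3)) + a := by
    simp only [dot, kF, ell1, PiLp.add_apply, PiLp.toLp_apply, Matrix.cons_val_zero, Matrix.cons_val_one,
      Matrix.head_cons, hadef, ← hxdef, ← hydef]
    field_simp
    ring
  have hd2 : dot (kF s + k') ell2 = (π + s*(π/3)) + b := by
    simp only [dot, kF, ell2, PiLp.add_apply, PiLp.toLp_apply, Matrix.cons_val_zero, Matrix.cons_val_one,
      Matrix.head_cons, hbdef, ← hxdef, ← hydef]
    field_simp
    ring
  clear_value x y a b r
  have hcos : Real.cos (s*(π/3)) = 1/2 := by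
    rcases hs with h | h <;> rw [h] <;> simp [Real.cos_pi_div_three]
  have hsin : Real.sin (s*(π/3)) = s * (Real.sqrt 3 / 2) := by
    rcases hs with h | h <;> rw [h] <;> simp [Real.sin_pi_div_three]
  have hexpc : Complex.exp (↑(s*(π/3)) * Complex.I)
      = ↑(1/2 : ℝ) + ↑(s * (Real.sqrt 3 / 2)) * Complex.I := by
    rw [exp_ofReal_mul_I', hcos, hsin]
  have hexpc' : Complex.exp (↑(-(s*(π/3))) * Complex.I)
      = ↑(1/2 : ℝ) + ↑(-(s * (Real.sqrt 3 / 2))) * Complex.I := by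
    rw [exp_ofReal_mul_I', Real.cos_neg, Real.sin_neg, hcos, hsin]
  set c : ℂ := ↑(1/2 : ℝ) + ↑(s * (Real.sqrt 3 / 2)) * Complex.I with hcdef
  set c' : ℂ := ↑(1/2 : ℝ) + ↑(-(s * (Real.sqrt 3 / 2))) * Complex.I with hc'def
  clear_value c c'
  have hmpi : Complex.exp (-(↑π * Complex.I)) = -1 := by
    rw [Complex.exp_neg, Complex.exp_pi_mul_I]; norm_num
  have hcc : c + c' = 1 := by rw [hcdef, hc'def]; push_cast; ring
  -- Omega factored
  have hOm : Omega (kF s + k')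
      = c * (1 - Complex.exp (-Complex.I * a)) + c' * (1 - Complex.exp (-Complex.I * b)) := by
    rw [Omega, hd1, hd2]
    have e1 : Complex.exp (-Complex.I * ↑((π - s*(π/3)) + a))
        = -(c * Complex.exp (-Complex.I * a)) := by
      rw [show (-Complex.I * ↑((π - s*(π/3)) + a) : ℂ)
          = ↑(s*(π/3)) * Complex.I + (-Complex.I * ↑a) + -(↑π * Complex.I) by push_cast; ring,
        Complex.exp_add, Complex.exp_add, hexpc, hmpi]
      ring
    have e2 : Complex.exp (-Complex.I * ↑((π + s*(π/3)) + b))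
        = -(c' * Complex.exp (-Complex.I * b)) := by
      rw [show (-Complex.I * ↑((π + s*(π/3)) + b) : ℂ)
          = ↑(-(s*(π/3))) * Complex.I + (-Complex.I * ↑b) + -(↑π * Complex.I) by push_cast; ring,
        Complex.exp_add, Complex.exp_add, hexpc', hmpi]
      ring
    rw [e1, e2]
    linear_combination -hcc
  have habs_c : ‖c‖ = 1 := by
    rw [hcdef, Complex.norm_def, Complex.normSq_add_mul_I]
    rw [show (1/2:ℝ)^2 + (s * (Real.sqrt 3 / 2))^2 = 1 by
      linear_combination (s^2/4) * h3 + (3/4) * hs2]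
    exact Real.sqrt_one
  have habs_c' : ‖c'‖ = 1 := by
    rw [hc'def, Complex.norm_def, Complex.normSq_add_mul_I]
    rw [show (1/2:ℝ)^2 + (-(s * (Real.sqrt 3 / 2)))^2 = 1 by
      linear_combination (s^2/4) * h3 + (3/4) * hs2]
    exact Real.sqrt_one
  set L : ℂ := c * (Complex.I * a) + c' * (Complex.I * b) with hLdef
  clear_value L
  have hLw : L = Complex.I * (↑((a+b)/2) + ↑(s * (Real.sqrt 3 / 2) * (a - b)) * Complex.I) := by
    rw [hLdef, hcdef, hc'def]; push_cast; ring
  have hLabs : ‖L‖ = 3/2 * r := by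
    rw [hLw, norm_mul, Complex.norm_I, one_mul, Complex.norm_def, Complex.normSq_add_mul_I]
    rw [show ((a+b)/2)^2 + (s * (Real.sqrt 3 / 2) * (a - b))^2 = (3/2*r)^2 by
      rw [hadef, hbdef]
      linear_combination (-9/4) * hr2
        + ((Real.sqrt 3)^2 * (Real.sqrt 3)^2 * y^2/4) * hs2
        + (((Real.sqrt 3)^2 + 3) * y^2/4) * h3]
    exact Real.sqrt_sq (by linarith)
  have habe : a ^ 2 + b ^ 2 = 9/2 * x^2 + 3/2 * y^2 := by
    rw [hadef, hbdef]; linear_combination (y^2/2) * h3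
  have hab2 : a ^ 2 + b ^ 2 ≤ 9/2 * r ^ 2 := by
    rw [habe, hr2]; linarith [sq_nonneg y]
  have hrr : r ^ 2 ≤ 1/81 := by nlinarith
  have ha1 : |a| ≤ 1 := by
    rw [← sq_le_one_iff_abs_le_one]; linarith [sq_nonneg b]
  have hb1 : |b| ≤ 1 := by
    rw [← sq_le_one_iff_abs_le_one]; linarith [sq_nonneg a]
  have hErr : ‖Omega (kF s + k') - L‖ ≤ 9/2 * r ^ 2 := by
    have heq : Omega (kF s + k') - L
        = c * ((1 - Complex.exp (-Complex.I * a)) - Complex.I * a)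
        + c' * ((1 - Complex.exp (-Complex.I * b)) - Complex.I * b) := by
      rw [hOm, hLdef]; ring
    rw [heq]
    calc ‖_‖ ≤ ‖c * ((1 - Complex.exp (-Complex.I * a)) - Complex.I * a)‖
          + ‖c' * ((1 - Complex.exp (-Complex.I * b)) - Complex.I * b)‖ :=
        norm_add_le _ _
      _ = ‖(1 - Complex.exp (-Complex.I * a)) - Complex.I * a‖
          + ‖(1 - Complex.exp (-Complex.I * b)) - Complex.I * b‖ := by
        rw [norm_mul, norm_mul, habs_c, habs_c']; ring
      _ ≤ a ^ 2 + b ^ 2 := add_le_add (f_est a ha1) (f_est b hb1)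
      _ ≤ 9/2 * r ^ 2 := hab2
  have htri1 : ‖L‖ ≤ ‖Omega (kF s + k')‖
      + ‖Omega (kF s + k') - L‖ := by
    have h := norm_sub_le (Omega (kF s + k')) (Omega (kF s + k') - L)
    rw [sub_sub_cancel] at h
    simpa using h
  have htri2 : ‖Omega (kF s + k')‖ ≤ ‖L‖
      + ‖Omega (kF s + k') - L‖ := by
    have h := norm_add_le L (Omega (kF s + k') - L)
    rw [add_sub_cancel] at h
    simpa using h
  have h9 : r ^ 2 ≤ r / 9 := by nlinarith [mul_nonneg hr0 (sub_nonneg.mpr hk)]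
  exact ⟨by linarith, by linarith⟩
end
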